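/- Let p be a prime and let G be a finite non-abelian p-group. Then Aut_c(G) = Autcent(G) if and only if Aut_c(G) is isomorphic as a group to Hom(G/Z(G), γ_2(G)) and γ_2(G) = Z(G). -/

import Mathlib

/-- `Aut^M(G)`: automorphisms `f` of `G` with `g⁻¹ * f g ∈ M` for all `g`. -/
def autM {G : Type*} [Group G] (M : Subgroup G) : Subgroup (MulAut G) where
  carrier := {f | ∀ g : G, g⁻¹ * f g ∈ M}
  one_mem' := by intro g; simpa using M.one_mem
  mul_mem' := by
    intro f₁ f₂ h₁ h₂ g
    have key : g⁻¹ * (f₁ * f₂) g = (g⁻¹ * f₂ g) * ((f₂ g)⁻¹ * f₁ (f₂ g)) := by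
      rw [MulAut.mul_apply]; group
    rw [key]; exact M.mul_mem (h₂ g) (h₁ (f₂ g))
  inv_mem' := by
    intro f hf g
    have h := M.inv_mem (hf (f⁻¹ g))
    simpa [MulAut.apply_inv_self, mul_inv_rev] using h

/-- `Aut_N(G)`: automorphisms of `G` fixing `N` elementwise. -/
def autN {G : Type*} [Group G] (N : Subgroup G) : Subgroup (MulAut G) where
  carrier := {f | ∀ n ∈ N, f n = n}
  one_mem' := fun n _ => rfl
  mul_mem' := by
    intro f₁ f₂ h₁ h₂ n hn
    rw [MulAut.mul_apply, h₂ n hn, h₁ n hn]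
  inv_mem' := by
    intro f hf n hn
    exact f.injective (by rw [MulAut.apply_inv_self]; exact (hf n hn).symm)

/-- `Aut_c^m(G)`: `m`-th class preserving automorphisms, conjugation by
elements of `γ_m(G) = lowerCentralSeries G (m-1)`. -/
def autC (G : Type*) [Group G] (m : ℕ) : Subgroup (MulAut G) where
  carrier := {f | ∀ g : G, ∃ x ∈ Subgroup.lowerCentralSeries (⊤ : Subgroup G) (m - 1), f g = x⁻¹ * g * x}
  one_mem' := fun g => ⟨1, Subgroup.one_mem _, by simp⟩
  mul_mem' := by
    intro f₁ f₂ h₁ h₂ g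
    obtain ⟨x, hx, hx2⟩ := h₂ g
    obtain ⟨y, hy, hy2⟩ := h₁ (x⁻¹ * g * x)
    exact ⟨x * y, Subgroup.mul_mem _ hx hy, by rw [MulAut.mul_apply, hx2, hy2]; group⟩
  inv_mem' := by
    intro f hf g
    obtain ⟨x, hx, hx2⟩ := hf (f⁻¹ g)
    refine ⟨x⁻¹, Subgroup.inv_mem _ hx, ?_⟩
    rw [MulAut.apply_inv_self] at hx2
    rw [inv_inv]
    conv_rhs => rw [hx2]
    group

/-- A group is purely non-abelian if it has no non-trivial abelian direct factor. -/
def PurelyNonabelian (H : Type u) [Group H] : Prop :=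
  ¬ ∃ (K B : Type u) (_ : Group K) (_ : CommGroup B),
      Nontrivial B ∧ Nonempty (H ≃* K × B)

open Subgroup

open scoped commutatorElement

universe u

namespace St12


/-- Homomorphism `Multiplicative (ZMod n) →* H` sending `ofAdd 1` to `w`, given `w ^ n = 1`. -/
noncomputable def zmodHom {H : Type*} [Group H] (n : ℕ) (w : H) (hw : w ^ n = 1) :
    Multiplicative (ZMod n) →* H :=
  AddMonoidHom.toMultiplicativeLeft
    (ZMod.lift n ⟨zmultiplesHom (Additive H) (Additive.ofMul w), by
      simp only [zmultiplesHom_apply, ← ofMul_zpow, zpow_natCast, hw, ofMul_one]⟩)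

lemma zmodHom_intCast {H : Type*} [Group H] (n : ℕ) (w : H) (hw : w ^ n = 1)
    (m : ℤ) : zmodHom n w hw (Multiplicative.ofAdd ((m : ℤ) : ZMod n)) = w ^ m := by
  simp only [zmodHom, AddMonoidHom.coe_toMultiplicativeLeft, Function.comp_apply,
    toAdd_ofAdd, ZMod.lift_coe, zmultiplesHom_apply, ← ofMul_zpow, toMul_ofMul]

lemma zmodHom_apply {H : Type*} [Group H] (n : ℕ) [NeZero n] (w : H) (hw : w ^ n = 1)
    (x : ZMod n) : zmodHom n w hw (Multiplicative.ofAdd x) = w ^ x.val := by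
  have hx : ((x.val : ℤ) : ZMod n) = x := by push_cast; simp [ZMod.natCast_val, ZMod.cast_id]
  calc zmodHom n w hw (Multiplicative.ofAdd x)
      = zmodHom n w hw (Multiplicative.ofAdd ((x.val : ℤ) : ZMod n)) := by rw [hx]
    _ = w ^ (x.val : ℤ) := zmodHom_intCast n w hw x.val
    _ = w ^ x.val := zpow_natCast w x.val


lemma orderOf_mult_zmod_dvd {n : ℕ} (y : Multiplicative (ZMod n)) : orderOf y ∣ n := by
  apply orderOf_dvd_of_pow_eq_one
  rw [← ofAdd_toAdd y, ← ofAdd_nsmul]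
  simp [nsmul_eq_mul, ZMod.natCast_self]

lemma dvd_exponent' {ι A : Type*} [Fintype ι] [CommGroup A] {n : ι → ℕ}
    (e : A ≃* ((i : ι) → Multiplicative (ZMod (n i)))) (i : ι) :
    n i ∣ Monoid.exponent A := by
  classical
  have h : n i = orderOf (e.symm <| Pi.mulSingle i <| .ofAdd 1) := by
    simpa only [MulEquiv.orderOf_eq, orderOf_piMulSingle, orderOf_ofAdd_eq_addOrderOf]
      using (ZMod.addOrderOf_one (n i)).symm
  exact h ▸ Monoid.order_dvd_exponent _

lemma exists_sep {A H : Type*} [CommGroup A] [Finite A] [Group H] [Finite H] (w : H)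
    (hw : Monoid.exponent A ∣ orderOf w) {a : A} (ha : a ≠ 1) :
    ∃ φ : A →* H, φ a ≠ 1 ∧ ∀ x, φ x ∈ Subgroup.zpowers w := by
  classical
  obtain ⟨ι, _, n, hn1, ⟨e⟩⟩ := CommGroup.equiv_prod_multiplicative_zmod_of_finite A
  have hi : ∃ i, e a i ≠ 1 := by
    contrapose! ha
    exact (MulEquiv.map_eq_one_iff e).mp (funext ha)
  obtain ⟨i, hi⟩ := hi
  haveI : NeZero (n i) := NeZero.of_gt (hn1 i)
  have hdvd : n i ∣ orderOf w := (dvd_exponent' e i).trans hw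
  have hw0 : orderOf w ≠ 0 := (orderOf_pos w).ne'
  set w' := w ^ (orderOf w / n i) with hw'def
  have how' : orderOf w' = n i := orderOf_pow_orderOf_div hw0 hdvd
  have hw'n : w' ^ (n i) = 1 := by rw [← how', pow_orderOf_eq_one]
  set ψ := zmodHom (n i) w' hw'n with hψ
  refine ⟨ψ.comp ((Pi.evalMonoidHom (fun i => Multiplicative (ZMod (n i))) i).comp
    e.toMonoidHom), ?_, ?_⟩
  · show ψ (e a i) ≠ 1
    rw [← ofAdd_toAdd (e a i), hψ, zmodHom_apply]
    intro hcon
    have h1 : orderOf w' ∣ (Multiplicative.toAdd (e a i)).val :=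
      orderOf_dvd_of_pow_eq_one hcon
    rw [how'] at h1
    have h2 := Nat.eq_zero_of_dvd_of_lt h1 (ZMod.val_lt _)
    apply hi
    have h3 : Multiplicative.toAdd (e a i) = 0 := (ZMod.val_eq_zero _).mp h2
    rw [← ofAdd_toAdd (e a i), h3]
    rfl
  · intro x
    show ψ (e x i) ∈ zpowers w
    rw [← ofAdd_toAdd (e x i), hψ, zmodHom_apply]
    exact pow_mem (pow_mem (mem_zpowers w) _) _

lemma exists_surj {A H : Type*} [CommGroup A] [Finite A] [Group H] [Finite H] {p : ℕ}
    (hp : p.Prime) (hpA : IsPGroup p A) (w : H) (hw : orderOf w ∣ Monoid.exponent A) :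
    ∃ φ : A →* H, (∀ x, φ x ∈ Subgroup.zpowers w) ∧ w ∈ Set.range φ := by
  classical
  by_cases hw1 : w = 1
  · exact ⟨1, fun x => by simp [Subgroup.one_mem], ⟨1, by simp [hw1]⟩⟩
  obtain ⟨ι, _, n, hn1, ⟨e⟩⟩ := CommGroup.equiv_prod_multiplicative_zmod_of_finite A
  haveI : Fact p.Prime := ⟨hp⟩
  obtain ⟨m, hm⟩ := IsPGroup.iff_card.mp hpA
  have hEdvd : Monoid.exponent A ∣ p ^ m := by
    rw [← hm]
    exact Monoid.exponent_dvd_of_forall_pow_eq_one fun a => pow_card_eq_one'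
  obtain ⟨eE, heEle, heE⟩ := (Nat.dvd_prime_pow hp).mp hEdvd
  have hEne1 : Monoid.exponent A ≠ 1 := by
    intro h1
    rw [h1, Nat.dvd_one, orderOf_eq_one_iff] at hw
    exact hw1 hw
  have heE1 : 1 ≤ eE := by
    rcases Nat.eq_zero_or_pos eE with h | h
    · exact absurd (by simpa [h] using heE) hEne1
    · exact h
  have hexists : ∃ j, Monoid.exponent A ∣ n j := by
    by_contra hno
    push_neg at hno
    have hni : ∀ i, n i ∣ p ^ (eE - 1) := by
      intro i
      obtain ⟨ei, heile, hei⟩ := (Nat.dvd_prime_pow hp).mp (heE ▸ dvd_exponent' e i)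
      have hne : ei ≠ eE := fun hcon => hno i (by rw [heE, hei, hcon])
      exact hei ▸ pow_dvd_pow p (by omega)
    have hallpow : ∀ x : A, x ^ (p ^ (eE - 1)) = 1 := by
      intro x
      apply e.injective
      rw [map_pow, map_one]
      funext i
      have : orderOf (e x i) ∣ p ^ (eE - 1) := (orderOf_mult_zmod_dvd _).trans (hni i)
      exact orderOf_dvd_iff_pow_eq_one.mp this
    have hd : Monoid.exponent A ∣ p ^ (eE - 1) :=
      Monoid.exponent_dvd_of_forall_pow_eq_one hallpow
    rw [heE] at hd
    have := (Nat.pow_dvd_pow_iff_le_right hp.one_lt).mp hd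
    omega
  obtain ⟨j, hj⟩ := hexists
  haveI : NeZero (n j) := NeZero.of_gt (hn1 j)
  haveI : Fact (1 < n j) := ⟨hn1 j⟩
  have hwnj : w ^ (n j) = 1 := orderOf_dvd_iff_pow_eq_one.mp (hw.trans hj)
  set ψ := zmodHom (n j) w hwnj with hψ
  refine ⟨ψ.comp ((Pi.evalMonoidHom (fun i => Multiplicative (ZMod (n i))) j).comp
    e.toMonoidHom), ?_, ?_⟩
  · intro x
    show ψ (e x j) ∈ zpowers w
    rw [← ofAdd_toAdd (e x j), hψ, zmodHom_apply]
    exact pow_mem (mem_zpowers w) _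
  · refine ⟨e.symm (Pi.mulSingle j (Multiplicative.ofAdd (1 : ZMod (n j)))), ?_⟩
    show ψ (e (e.symm _) j) = w
    rw [MulEquiv.apply_symm_apply, Pi.mulSingle_eq_same, hψ, zmodHom_apply, ZMod.val_one, pow_one]



section GroupPart

variable {G : Type u} [Group G]

lemma mem_autC_one {f : MulAut G} :
    f ∈ autC G 1 ↔ ∀ g : G, ∃ x : G, f g = x⁻¹ * g * x := by
  show (∀ g : G, ∃ x ∈ Subgroup.lowerCentralSeries (⊤ : Subgroup G) 0, f g = x⁻¹ * g * x) ↔ _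
  simp [Subgroup.lowerCentralSeries_zero]

lemma mem_autM_iff {M : Subgroup G} {f : MulAut G} :
    f ∈ autM M ↔ ∀ g : G, g⁻¹ * f g ∈ M := Iff.rfl

lemma autC_fix_center {f : MulAut G} (hf : f ∈ autC G 1) {z : G}
    (hz : z ∈ Subgroup.center G) : f z = z := by
  obtain ⟨x, hx⟩ := mem_autC_one.mp hf z
  rw [Subgroup.mem_center_iff] at hz
  rw [hx, mul_assoc, ← hz x, ← mul_assoc, inv_mul_cancel, one_mul]

lemma autC_apply_commutator {f : MulAut G} (hf : f ∈ autC G 1) (g : G) :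
    g⁻¹ * f g ∈ commutator G := by
  obtain ⟨x, hx⟩ := mem_autC_one.mp hf g
  have hcomm : g⁻¹ * (x⁻¹ * g * x) = ⁅g⁻¹, x⁻¹⁆ := by
    rw [commutatorElement_def]; group
  rw [hx, hcomm, _root_.commutator_def]
  exact Subgroup.commutator_mem_commutator (Subgroup.mem_top _) (Subgroup.mem_top _)

lemma commutatorElement_mul_center {z z' : G} (hz : z ∈ Subgroup.center G)
    (hz' : z' ∈ Subgroup.center G) (a b : G) : ⁅a * z, b * z'⁆ = ⁅a, b⁆ := by
  have h1 := Subgroup.mem_center_iff.mp hz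
  have h2 := Subgroup.mem_center_iff.mp hz'
  simp only [commutatorElement_def, mul_inv_rev]
  calc a * z * (b * z') * (z⁻¹ * a⁻¹) * (z'⁻¹ * b⁻¹)
      = a * (z * (b * z')) * z⁻¹ * a⁻¹ * z'⁻¹ * b⁻¹ := by group
    _ = a * ((b * z') * z) * z⁻¹ * a⁻¹ * z'⁻¹ * b⁻¹ := by rw [h1 (b * z')]
    _ = a * b * (z' * a⁻¹) * z'⁻¹ * b⁻¹ := by group
    _ = a * b * (a⁻¹ * z') * z'⁻¹ * b⁻¹ := by rw [h2 a⁻¹]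
    _ = a * b * a⁻¹ * b⁻¹ := by group

lemma autM_center_fix_commutator {f : MulAut G} (hf : f ∈ autM (Subgroup.center G))
    {c : G} (hc : c ∈ commutator G) : f c = c := by
  let K : Subgroup G :=
    { carrier := {g | f g = g}
      one_mem' := map_one f
      mul_mem' := by intro a b ha hb; show f (a * b) = a * b; rw [map_mul, ha, hb]
      inv_mem' := by intro a ha; show f a⁻¹ = a⁻¹; rw [map_inv, ha] }
  have hK : commutator G ≤ K := by
    rw [_root_.commutator_def, Subgroup.commutator_le]
    intro g _ x _
    show f ⁅g, x⁆ = ⁅g, x⁆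
    have e1 : f g = g * (g⁻¹ * f g) := by group
    have e2 : f x = x * (x⁻¹ * f x) := by group
    calc f ⁅g, x⁆ = ⁅f g, f x⁆ := map_commutatorElement f.toMonoidHom g x
      _ = ⁅g * (g⁻¹ * f g), x * (x⁻¹ * f x)⁆ := by rw [← e1, ← e2]
      _ = ⁅g, x⁆ := commutatorElement_mul_center (hf g) (hf x) g x
  exact hK hc

/-- The map `g ↦ g⁻¹ * f g` as a homomorphism, when its values are central. -/
def chiHom (f : MulAut G) (hc : ∀ g : G, g⁻¹ * f g ∈ Subgroup.center G) : G →* G where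
  toFun g := g⁻¹ * f g
  map_one' := by simp
  map_mul' a b := by
    have h := Subgroup.mem_center_iff.mp (hc a)
    show (a * b)⁻¹ * f (a * b) = (a⁻¹ * f a) * (b⁻¹ * f b)
    rw [map_mul]
    calc (a * b)⁻¹ * (f a * f b) = b⁻¹ * (a⁻¹ * f a) * f b := by group
      _ = (a⁻¹ * f a) * b⁻¹ * f b := by rw [h b⁻¹]
      _ = (a⁻¹ * f a) * (b⁻¹ * f b) := by group

/-- The evaluation map `g ↦ g * θ (of g)` as a homomorphism, when `θ` has central values. -/
def evalHom (θ : Abelianization G →* G) (hcen : ∀ a, θ a ∈ Subgroup.center G) : G →* G where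
  toFun g := g * θ (Abelianization.of g)
  map_one' := by simp
  map_mul' a b := by
    have h := Subgroup.mem_center_iff.mp (hcen (Abelianization.of a))
    show a * b * θ (Abelianization.of (a * b)) =
      (a * θ (Abelianization.of a)) * (b * θ (Abelianization.of b))
    rw [map_mul, map_mul]
    calc a * b * (θ (Abelianization.of a) * θ (Abelianization.of b))
        = a * (b * θ (Abelianization.of a)) * θ (Abelianization.of b) := by group
      _ = a * (θ (Abelianization.of a) * b) * θ (Abelianization.of b) := by rw [h b]
      _ = _ := by group

lemma machine [Finite G] (h : autC G 1 = autM (Subgroup.center G))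
    (θ : Abelianization G →* G) (hcen : ∀ a, θ a ∈ Subgroup.center G)
    (hker : ∀ g : G, g * θ (Abelianization.of g) = 1 → g = 1) :
    (∀ z ∈ Subgroup.center G, θ (Abelianization.of z) = 1) ∧
      ∀ a, θ a ∈ _root_.commutator G := by
  set F := evalHom θ hcen with hF
  have hFapp : ∀ g : G, F g = g * θ (Abelianization.of g) := fun g => rfl
  have hFinj : Function.Injective F := by
    rw [← MonoidHom.ker_eq_bot_iff]
    exact (Subgroup.eq_bot_iff_forall _).mpr fun g hg => hker g hg
  let e : MulAut G := MulEquiv.ofBijective F ((Finite.injective_iff_bijective).mp hFinj)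
  have heapp : ∀ g : G, e g = g * θ (Abelianization.of g) := fun g => rfl
  have heM : e ∈ autM (Subgroup.center G) := by
    intro g
    have : g⁻¹ * e g = θ (Abelianization.of g) := by rw [heapp]; group
    rw [this]; exact hcen _
  have heC : e ∈ autC G 1 := by rw [h]; exact heM
  constructor
  · intro z hz
    have h1 : e z = z := autC_fix_center heC hz
    rw [heapp] at h1
    calc θ (Abelianization.of z) = z⁻¹ * (z * θ (Abelianization.of z)) := by group
      _ = z⁻¹ * z := by rw [h1]
      _ = 1 := by group
  · intro a
    have ha : ∃ g : G, Abelianization.of g = a := by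
      show ∃ g : G, (QuotientGroup.mk g : G ⧸ _root_.commutator G) = a
      exact QuotientGroup.mk_surjective a
    obtain ⟨g, rfl⟩ := ha
    have h1 : θ (Abelianization.of g) = g⁻¹ * e g := by rw [heapp]; group
    rw [h1]
    exact autC_apply_commutator heC g

lemma hker_of_commutator (θ : Abelianization G →* G)
    (him : ∀ a, θ a ∈ _root_.commutator G) :
    ∀ g : G, g * θ (Abelianization.of g) = 1 → g = 1 := by
  intro g hg
  have h1 : g = (θ (Abelianization.of g))⁻¹ := eq_inv_of_mul_eq_one_left hg
  have h2 : g ∈ _root_.commutator G := h1 ▸ (Subgroup.inv_mem _ (him _))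
  have h3 : Abelianization.of g = 1 :=
    (QuotientGroup.eq_one_iff (N := _root_.commutator G) g).mpr h2
  rw [h3, map_one, mul_one] at hg
  exact hg

lemma hker_of_pow [Finite G] {p : ℕ} (hp : p.Prime) (hpG : IsPGroup p G)
    (θ : Abelianization G →* G) (hcen : ∀ a, θ a ∈ Subgroup.center G)
    (hpow : ∀ z ∈ Subgroup.center G, ∃ v ∈ Subgroup.center G,
      θ (Abelianization.of z) = v ^ p) :
    ∀ g : G, g * θ (Abelianization.of g) = 1 → g = 1 := by
  intro g hg
  have h1 : g = (θ (Abelianization.of g))⁻¹ := eq_inv_of_mul_eq_one_left hg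
  have hgc : g ∈ Subgroup.center G := by
    rw [h1]; exact Subgroup.inv_mem _ (hcen _)
  have key : ∀ k : ℕ, ∃ v ∈ Subgroup.center G, g = v ^ (p ^ k) := by
    intro k
    induction k with
    | zero => exact ⟨g, hgc, by simp⟩
    | succ k ih =>
      obtain ⟨v, hv, hvk⟩ := ih
      obtain ⟨w, hwc, hw⟩ := hpow v hv
      refine ⟨w⁻¹, Subgroup.inv_mem _ hwc, ?_⟩
      have hexp : p ^ (k + 1) = p * p ^ k := pow_succ' p k
      calc g = (θ (Abelianization.of g))⁻¹ := h1
        _ = (θ (Abelianization.of (v ^ p ^ k)))⁻¹ := by rw [← hvk]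
        _ = ((θ (Abelianization.of v)) ^ p ^ k)⁻¹ := by rw [map_pow, map_pow]
        _ = ((w ^ p) ^ p ^ k)⁻¹ := by rw [hw]
        _ = (w⁻¹) ^ p ^ (k + 1) := by rw [hexp, inv_pow, pow_mul]
  haveI : Fact p.Prime := ⟨hp⟩
  obtain ⟨m, hm⟩ := IsPGroup.iff_card.mp hpG
  obtain ⟨v, hv, hvm⟩ := key m
  rw [hvm]
  exact orderOf_dvd_iff_pow_eq_one.mp (hm ▸ orderOf_dvd_natCard v)

end GroupPart

section Main

variable {G : Type u} [Group G]

lemma exists_commutator_orderOf_p [Finite G] {p : ℕ} (hp : p.Prime) (hpG : IsPGroup p G)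
    (hna : ¬ ∀ a b : G, a * b = b * a) :
    ∃ w : G, w ∈ _root_.commutator G ∧ orderOf w = p := by
  push_neg at hna
  obtain ⟨a, b, hab⟩ := hna
  have hc1 : ⁅a, b⁆ ≠ 1 := fun hcon => hab (commutatorElement_eq_one_iff_mul_comm.mp hcon)
  have hcmem : ⁅a, b⁆ ∈ _root_.commutator G := by
    rw [_root_.commutator_def]
    exact Subgroup.commutator_mem_commutator (Subgroup.mem_top _) (Subgroup.mem_top _)
  obtain ⟨k, hk⟩ := hpG ⁅a, b⁆
  have hdvd : orderOf ⁅a, b⁆ ∣ p ^ k := orderOf_dvd_of_pow_eq_one hk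
  obtain ⟨j, hjle, hj⟩ := (Nat.dvd_prime_pow hp).mp hdvd
  have hj0 : j ≠ 0 := by
    intro hcon
    rw [hcon, pow_zero, orderOf_eq_one_iff] at hj
    exact hc1 hj
  have hpd : p ∣ orderOf ⁅a, b⁆ := hj ▸ dvd_pow_self p hj0
  refine ⟨⁅a, b⁆ ^ (orderOf ⁅a, b⁆ / p), Subgroup.pow_mem _ hcmem _, ?_⟩
  exact orderOf_pow_orderOf_div (orderOf_pos _).ne' hpd

lemma center_le_commutator [Finite G] {p : ℕ} (hp : p.Prime) (hpG : IsPGroup p G)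
    (hna : ¬ ∀ a b : G, a * b = b * a)
    (hγZ : _root_.commutator G ≤ Subgroup.center G)
    (h : autC G 1 = autM (Subgroup.center G)) :
    Subgroup.center G ≤ _root_.commutator G := by
  haveI : Fact p.Prime := ⟨hp⟩
  by_contra hnot
  rw [SetLike.le_def] at hnot
  push_neg at hnot
  obtain ⟨z₀, hz₀c, hz₀n⟩ := hnot
  by_cases hcase : ∀ z ∈ Subgroup.center G, ∃ b : Abelianization G, b ^ p = Abelianization.of z
  · -- Case II
    by_cases hIIa : ∃ θ : Abelianization G →* G,
        (∀ a, θ a ∈ Subgroup.center G) ∧ ¬ ∀ a, θ a ∈ _root_.commutator G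
    · obtain ⟨θ, hθc, hθn⟩ := hIIa
      apply hθn
      refine (machine h θ hθc (hker_of_pow hp hpG θ hθc ?_)).2
      intro z hz
      obtain ⟨b, hb⟩ := hcase z hz
      exact ⟨θ b, hθc b, by rw [← hb, map_pow]⟩
    · push_neg at hIIa
      have hpA : IsPGroup p (Abelianization G) := by
        have := hpG.to_quotient (_root_.commutator G)
        exact this
      have hz₀bar : Abelianization.of z₀ ≠ 1 := by
        intro hcon
        exact hz₀n ((QuotientGroup.eq_one_iff (N := _root_.commutator G) z₀).mp hcon)
      by_cases hord : orderOf z₀ ∣ Monoid.exponent (Abelianization G)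
      · obtain ⟨θ, hθpow, hθrange⟩ := exists_surj hp hpA z₀ hord
        have hθc : ∀ a, θ a ∈ Subgroup.center G :=
          fun a => Subgroup.zpowers_le.mpr hz₀c (hθpow a)
        obtain ⟨x, hx⟩ := hθrange
        exact hz₀n (hx ▸ hIIa θ hθc x)
      · -- exponent of A divides orderOf z₀
        have hEdvd : Monoid.exponent (Abelianization G) ∣ orderOf z₀ := by
          obtain ⟨mA, hmA⟩ := IsPGroup.iff_card.mp hpA
          have hE : Monoid.exponent (Abelianization G) ∣ p ^ mA := by
            rw [← hmA]
            exact Monoid.exponent_dvd_of_forall_pow_eq_one fun a => pow_card_eq_one'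
          obtain ⟨eA, heAle, heA⟩ := (Nat.dvd_prime_pow hp).mp hE
          obtain ⟨m, hm⟩ := IsPGroup.iff_card.mp hpG
          have hz : orderOf z₀ ∣ p ^ m := hm ▸ orderOf_dvd_natCard z₀
          obtain ⟨d, hdle, hd⟩ := (Nat.dvd_prime_pow hp).mp hz
          rw [heA, hd]
          rw [heA, hd] at hord
          have : ¬ d ≤ eA := fun hcon =>
            hord (pow_dvd_pow p hcon)
          exact pow_dvd_pow p (by omega)
        obtain ⟨θ, hθ1, hθ2⟩ := exists_sep z₀ hEdvd hz₀bar
        have hθc : ∀ a, θ a ∈ Subgroup.center G :=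
          fun a => Subgroup.zpowers_le.mpr hz₀c (hθ2 a)
        have hpow : ∀ z ∈ Subgroup.center G, ∃ v ∈ Subgroup.center G,
            θ (Abelianization.of z) = v ^ p := by
          intro z hz
          obtain ⟨b, hb⟩ := hcase z hz
          exact ⟨θ b, hθc b, by rw [← hb, map_pow]⟩
        have := (machine h θ hθc (hker_of_pow hp hpG θ hθc hpow)).1 z₀ hz₀c
        exact hθ1 this
  · -- Case I
    push_neg at hcase
    obtain ⟨z₁, hz₁c, hz₁⟩ := hcase
    set R : Subgroup (Abelianization G) := (powMonoidHom p : Abelianization G →* _).range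
      with hR
    have hv₁ : (QuotientGroup.mk (Abelianization.of z₁) : Abelianization G ⧸ R) ≠ 1 := by
      intro hcon
      rw [QuotientGroup.eq_one_iff] at hcon
      obtain ⟨b, hb⟩ := hcon
      exact hz₁ b hb
    have hexpV : Monoid.exponent (Abelianization G ⧸ R) ∣ p := by
      apply Monoid.exponent_dvd_of_forall_pow_eq_one
      intro x
      obtain ⟨b, rfl⟩ := QuotientGroup.mk_surjective x
      show ((QuotientGroup.mk' R) b) ^ p = 1
      rw [← map_pow]
      exact (QuotientGroup.eq_one_iff _).mpr ⟨b, rfl⟩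
    obtain ⟨w, hwmem, hworder⟩ := exists_commutator_orderOf_p hp hpG hna
    obtain ⟨φ, hφ1, hφ2⟩ := exists_sep w (hworder ▸ hexpV) hv₁
    set θ : Abelianization G →* G := φ.comp (QuotientGroup.mk' R) with hθ
    have hcenθ : ∀ a, θ a ∈ Subgroup.center G :=
      fun a => hγZ (Subgroup.zpowers_le.mpr hwmem (hφ2 _))
    have himθ : ∀ a, θ a ∈ _root_.commutator G :=
      fun a => Subgroup.zpowers_le.mpr hwmem (hφ2 _)
    have := (machine h θ hcenθ (hker_of_commutator θ himθ)).1 z₁ hz₁c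
    exact hφ1 this

end Main

lemma mem_iff_of_eq {G : Type u} [Group G] {H K : Subgroup G} (h : H = K) {x : G} :
    x ∈ H ↔ x ∈ K := by rw [h]

section Assemble

variable {G : Type u} [Group G]

/-- The lifted homomorphism `G/Z(G) →* γ₂(G)` attached to an automorphism. -/
def liftedChi (f : MulAut G) (hcen : ∀ g : G, g⁻¹ * f g ∈ Subgroup.center G)
    (hmem : ∀ g : G, g⁻¹ * f g ∈ Subgroup.lowerCentralSeries (⊤ : Subgroup G) 1)
    (hfix : ∀ z ∈ Subgroup.center G, f z = z) :
    (G ⧸ Subgroup.center G) →* ↥(Subgroup.lowerCentralSeries (⊤ : Subgroup G) 1) :=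
  QuotientGroup.lift (Subgroup.center G)
    (MonoidHom.codRestrict (chiHom f hcen) (Subgroup.lowerCentralSeries (⊤ : Subgroup G) 1) hmem)
    (by
      intro z hz
      rw [MonoidHom.mem_ker]
      apply Subtype.ext
      show z⁻¹ * f z = 1
      rw [hfix z hz]
      group)

lemma liftedChi_apply (f : MulAut G) (hcen) (hmem) (hfix) (g : G) :
    (liftedChi f hcen hmem hfix (QuotientGroup.mk g) : G) = g⁻¹ * f g := rfl

/-- The automorphism attached to a homomorphism `G/Z(G) →* γ₂(G)`, when
`γ₂(G) = Z(G)` and `G` is finite. -/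
def tauHom (τ : (G ⧸ Subgroup.center G) →* ↥(Subgroup.lowerCentralSeries (⊤ : Subgroup G) 1))
    (hZ : Subgroup.lowerCentralSeries (⊤ : Subgroup G) 1 = Subgroup.center G) : G →* G where
  toFun g := g * (τ (QuotientGroup.mk g) : G)
  map_one' := by simp; exact map_one τ
  map_mul' a b := by
    have hv : ∀ x : G ⧸ Subgroup.center G, (τ x : G) ∈ Subgroup.center G :=
      fun x => (mem_iff_of_eq hZ).mp (τ x).2
    have h := Subgroup.mem_center_iff.mp (hv (QuotientGroup.mk a))
    show a * b * (τ (QuotientGroup.mk (a * b)) : G) = _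
    have hmk : (QuotientGroup.mk (a * b) : G ⧸ Subgroup.center G) =
        QuotientGroup.mk a * QuotientGroup.mk b := rfl
    rw [hmk, map_mul]
    push_cast
    calc a * b * ((τ (QuotientGroup.mk a) : G) * (τ (QuotientGroup.mk b) : G))
        = a * (b * (τ (QuotientGroup.mk a) : G)) * (τ (QuotientGroup.mk b) : G) := by
          group
      _ = a * ((τ (QuotientGroup.mk a) : G) * b) * (τ (QuotientGroup.mk b) : G) := by
          rw [h b]
      _ = _ := by group

lemma tauHom_injective [Finite G] (τ : (G ⧸ Subgroup.center G) →* ↥(Subgroup.lowerCentralSeries (⊤ : Subgroup G) 1))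
    (hZ : Subgroup.lowerCentralSeries (⊤ : Subgroup G) 1 = Subgroup.center G) :
    Function.Injective (tauHom τ hZ) := by
  rw [← MonoidHom.ker_eq_bot_iff]
  apply (Subgroup.eq_bot_iff_forall _).mpr
  intro g hg
  rw [MonoidHom.mem_ker] at hg
  have hg' : g * (τ (QuotientGroup.mk g) : G) = 1 := hg
  have hgc : g ∈ Subgroup.center G := by
    rw [eq_inv_of_mul_eq_one_left hg']
    exact Subgroup.inv_mem _ ((mem_iff_of_eq hZ).mp (τ (QuotientGroup.mk g)).2)
  have hmk : (QuotientGroup.mk g : G ⧸ Subgroup.center G) = 1 :=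
    (QuotientGroup.eq_one_iff g).mpr hgc
  rw [hmk, map_one] at hg'
  simpa using hg'

/-- Forward construction: the equivalence. -/
lemma forward_equiv [Finite G] (h : autC G 1 = autM (Subgroup.center G))
    (hZ : Subgroup.lowerCentralSeries (⊤ : Subgroup G) 1 = Subgroup.center G) :
    ∃ φ : (autC G 1) ≃ ((G ⧸ Subgroup.center G) →* (Subgroup.lowerCentralSeries (⊤ : Subgroup G) 1)),
      ∀ (f₁ f₂ : autC G 1) (x : G ⧸ Subgroup.center G),
        φ (f₁ * f₂) x = φ f₁ x * φ f₂ x := by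
  have hcen : ∀ f : autC G 1, ∀ g : G, g⁻¹ * (f : MulAut G) g ∈ Subgroup.center G :=
    fun f g => ((mem_iff_of_eq h).mp f.2) g
  have hmem : ∀ f : autC G 1, ∀ g : G, g⁻¹ * (f : MulAut G) g ∈ Subgroup.lowerCentralSeries (⊤ : Subgroup G) 1 :=
    fun f g => (mem_iff_of_eq hZ).mpr (hcen f g)
  have hfix : ∀ f : autC G 1, ∀ z ∈ Subgroup.center G, (f : MulAut G) z = z :=
    fun f => fun z hz => autC_fix_center f.2 hz
  have hbij : ∀ τ : (G ⧸ Subgroup.center G) →* ↥(Subgroup.lowerCentralSeries (⊤ : Subgroup G) 1),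
      Function.Bijective (tauHom τ hZ) :=
    fun τ => Finite.injective_iff_bijective.mp (tauHom_injective τ hZ)
  have hmemC : ∀ τ, (MulEquiv.ofBijective (tauHom τ hZ) (hbij τ) : MulAut G) ∈ autC G 1 := by
    intro τ
    rw [h]
    intro g
    show g⁻¹ * (tauHom τ hZ g) ∈ Subgroup.center G
    have heq : g⁻¹ * (tauHom τ hZ g) = (τ (QuotientGroup.mk g) : G) := by
      show g⁻¹ * (g * (τ (QuotientGroup.mk g) : G)) = _
      group
    rw [heq]
    exact (mem_iff_of_eq hZ).mp (τ (QuotientGroup.mk g)).2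
  refine ⟨{
    toFun := fun f => liftedChi (f : MulAut G) (hcen f) (hmem f) (hfix f)
    invFun := fun τ => ⟨MulEquiv.ofBijective (tauHom τ hZ) (hbij τ), hmemC τ⟩
    left_inv := ?_
    right_inv := ?_ }, ?_⟩
  · -- left inverse
    intro f
    apply Subtype.ext
    apply MulEquiv.ext
    intro g
    show tauHom (liftedChi (f : MulAut G) (hcen f) (hmem f) (hfix f)) hZ g = (f : MulAut G) g
    show g * (liftedChi (f : MulAut G) (hcen f) (hmem f) (hfix f) (QuotientGroup.mk g) : G)
      = (f : MulAut G) g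
    rw [liftedChi_apply]
    group
  · -- right inverse
    intro τ
    apply QuotientGroup.monoidHom_ext
    apply MonoidHom.ext
    intro g
    apply Subtype.ext
    show g⁻¹ * (g * (τ (QuotientGroup.mk g) : G)) = (τ (QuotientGroup.mk g) : G)
    group
  · -- multiplicativity
    intro f₁ f₂ x
    induction x using QuotientGroup.induction_on with
    | H g =>
      apply Subtype.ext
      show g⁻¹ * ((f₁ : MulAut G) ((f₂ : MulAut G) g))
          = (g⁻¹ * (f₁ : MulAut G) g) * (g⁻¹ * (f₂ : MulAut G) g)
      have hc₂ : g⁻¹ * (f₂ : MulAut G) g ∈ Subgroup.center G := hcen f₂ g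
      have e2 : (f₁ : MulAut G) ((f₂ : MulAut G) g)
          = (f₁ : MulAut G) g * (g⁻¹ * (f₂ : MulAut G) g) := by
        conv_lhs => rw [show (f₂ : MulAut G) g = g * (g⁻¹ * (f₂ : MulAut G) g) from by group]
        rw [map_mul, hfix f₁ _ hc₂]
      rw [e2]
      group

/-- Backward direction. -/
lemma backward [Finite G] (hZ : Subgroup.lowerCentralSeries (⊤ : Subgroup G) 1 = Subgroup.center G)
    (φ : (autC G 1) ≃ ((G ⧸ Subgroup.center G) →* (Subgroup.lowerCentralSeries (⊤ : Subgroup G) 1))) :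
    autC G 1 = autM (Subgroup.center G) := by
  haveI : Finite (MulAut G) :=
    Finite.of_injective (fun f => (f : G → G)) DFunLike.coe_injective
  haveI : Finite ((G ⧸ Subgroup.center G) →* ↥(Subgroup.lowerCentralSeries (⊤ : Subgroup G) 1)) :=
    Finite.of_injective (fun f => (f : G ⧸ Subgroup.center G → ↥(Subgroup.lowerCentralSeries (⊤ : Subgroup G) 1)))
      DFunLike.coe_injective
  have hTS : autC G 1 ≤ autM (Subgroup.center G) := by
    intro f hf g
    have := autC_apply_commutator hf g
    rw [← hZ]
    exact this
  -- injection from autM into homs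
  have hcen : ∀ f : autM (Subgroup.center G), ∀ g : G,
      g⁻¹ * (f : MulAut G) g ∈ Subgroup.center G := fun f g => f.2 g
  have hmem : ∀ f : autM (Subgroup.center G), ∀ g : G,
      g⁻¹ * (f : MulAut G) g ∈ Subgroup.lowerCentralSeries (⊤ : Subgroup G) 1 := fun f g => (mem_iff_of_eq hZ).mpr (hcen f g)
  have hfix : ∀ f : autM (Subgroup.center G), ∀ z ∈ Subgroup.center G,
      (f : MulAut G) z = z := by
    intro f z hz
    apply autM_center_fix_commutator f.2
    exact (mem_iff_of_eq hZ).mpr hz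
  set Ψ : autM (Subgroup.center G) → ((G ⧸ Subgroup.center G) →* ↥(Subgroup.lowerCentralSeries (⊤ : Subgroup G) 1)) :=
    fun f => liftedChi (f : MulAut G) (hcen f) (hmem f) (hfix f) with hΨ
  have hΨinj : Function.Injective Ψ := by
    intro f₁ f₂ hf
    apply Subtype.ext
    apply MulEquiv.ext
    intro g
    have h1 : (Ψ f₁ (QuotientGroup.mk g) : G) = (Ψ f₂ (QuotientGroup.mk g) : G) := by rw [hf]
    rw [hΨ] at h1
    simp only [liftedChi_apply] at h1
    exact mul_left_cancel h1
  have hcard : Nat.card (autM (Subgroup.center G)) ≤ Nat.card (autC G 1) := by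
    calc Nat.card (autM (Subgroup.center G))
        ≤ Nat.card ((G ⧸ Subgroup.center G) →* ↥(Subgroup.lowerCentralSeries (⊤ : Subgroup G) 1)) :=
          Nat.card_le_card_of_injective Ψ hΨinj
      _ = Nat.card (autC G 1) := Nat.card_congr φ.symm
  exact Subgroup.eq_of_le_of_card_ge hTS hcard

end Assemble

lemma commutator_le_center {G : Type u} [Group G] (h : autC G 1 = autM (Subgroup.center G)) :
    _root_.commutator G ≤ Subgroup.center G := by
  have hconj : ∀ x : G, (MulAut.conj x : MulAut G) ∈ autC G 1 := by
    intro x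
    rw [mem_autC_one]
    intro g
    exact ⟨x⁻¹, by rw [MulAut.conj_apply]; group⟩
  rw [_root_.commutator_def, Subgroup.commutator_le]
  intro g _ x _
  have h1 := ((mem_iff_of_eq h).mp (hconj g)) x⁻¹
  have h2 : (x⁻¹)⁻¹ * (MulAut.conj g x⁻¹) = ⁅x, g⁆ := by
    rw [MulAut.conj_apply, commutatorElement_def]; group
  rw [h2] at h1
  have h3 := Subgroup.inv_mem _ h1
  rwa [commutatorElement_inv] at h3

end St12

/-- for a finite non-abelian `p`-group `G`,
`Aut_c(G) = Autcent(G)` iff `Aut_c(G)` is isomorphic as a group to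
`Hom(G/Z(G), γ_2(G))` (with pointwise multiplication) and `γ_2(G) = Z(G)`. -/
theorem statement12 {p : ℕ} (hp : p.Prime) {G : Type u} [Group G] [Finite G]
    (hpG : IsPGroup p G) (hna : ¬ ∀ a b : G, a * b = b * a) :
    autC G 1 = autM (Subgroup.center G) ↔
      ((∃ φ : (autC G 1) ≃
          ((G ⧸ Subgroup.center G) →* (Subgroup.lowerCentralSeries (⊤ : Subgroup G) 1)),
        ∀ (f₁ f₂ : autC G 1) (x : G ⧸ Subgroup.center G),
          φ (f₁ * f₂) x = φ f₁ x * φ f₂ x) ∧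
        Subgroup.lowerCentralSeries (⊤ : Subgroup G) 1 = Subgroup.center G) := by
  constructor
  · intro h
    have hγZ : _root_.commutator G ≤ Subgroup.center G := St12.commutator_le_center h
    have hZγ : Subgroup.center G ≤ _root_.commutator G :=
      St12.center_le_commutator hp hpG hna hγZ h
    have hZ : Subgroup.lowerCentralSeries (⊤ : Subgroup G) 1 = Subgroup.center G := by
      rw [Subgroup.top_lowerCentralSeries_one]
      exact le_antisymm hγZ hZγ
    exact ⟨St12.forward_equiv h hZ, hZ⟩
  · rintro ⟨⟨φ, -⟩, hZ⟩
    exact St12.backward hZ φ
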